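/- arXiv:1510.01072 — 2 statements merged into one kernel-verified Lean document; each statement's English description precedes it below -/
import Mathlib

section
/- Let c ≥ 192 and α ≥ 192 be reals, and suppose c = (α/ε)·log D with log d(s,t) ≤ log D (logarithms base 2), and let D ≥ d ≥ c ≥ 192 with (α/c)·log d ≤ ε ≤ 1. Then (48/c)·d + (1 + (α/c)·log((1+1/c)·d) − α/(2c))·(1+2/c)·(1+1/c)·d ≤ (1 + (α/c)·log d)·d. -/
lemma stretch_aux (u k L : ℝ) (hu : 0 < u) (hu1 : u ≤ 1/192)
    (hk : 0 ≤ k) (hk7 : k ≤ 1/7) (hkL : k * L ≤ 1) (hku : 96 * u ≤ k / 2) :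
    48*u + (1 + k*L + 2*k*u - k/2) * (1+2*u) * (1+u) ≤ 1 + k*L := by
  nlinarith [mul_nonneg hk hu.le, sq_nonneg u, mul_nonneg (mul_nonneg hk hu.le) hu.le,
    mul_nonneg hu.le hu.le, mul_le_mul_of_nonneg_right hk7 hu.le,
    mul_le_mul_of_nonneg_right hku hu.le, mul_nonneg (mul_nonneg hu.le hu.le) hu.le,
    mul_le_mul_of_nonneg_right (mul_le_mul_of_nonneg_right hku hu.le) hu.le,
    mul_le_mul_of_nonneg_right hkL hu.le,
    mul_le_mul_of_nonneg_right (mul_le_mul_of_nonneg_right hkL hu.le) hu.le]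

theorem stretch_inductive_inequality (c α ε D d : ℝ)
    (hc : 192 ≤ c) (hα : 192 ≤ α) (hε : 0 < ε) (hε1 : ε ≤ 1)
    (hcdef : c = (α / ε) * Real.logb 2 D)
    (hlog : Real.logb 2 d ≤ Real.logb 2 D)
    (hcd : c ≤ d) (hdD : d ≤ D)
    (hαc : (α / c) * Real.logb 2 d ≤ ε) :
    (48 / c) * d
      + (1 + (α / c) * Real.logb 2 ((1 + 1 / c) * d) - α / (2 * c))
          * (1 + 2 / c) * (1 + 1 / c) * d
      ≤ (1 + (α / c) * Real.logb 2 d) * d := by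
  have hc0 : (0:ℝ) < c := by linarith
  have hd0 : (0:ℝ) < d := by linarith
  have hα0 : (0:ℝ) < α := by linarith
  have hk0 : 0 ≤ α / c := by positivity
  set L := Real.logb 2 d with hLdef
  -- L ≥ 7
  have hL7 : (7:ℝ) ≤ L := by
    have h128 : Real.logb 2 128 ≤ L := by
      exact Real.logb_le_logb_of_le one_lt_two (by norm_num) (by linarith)
    have : Real.logb 2 128 = 7 := by
      rw [show (128:ℝ) = 2 ^ (7:ℕ) by norm_num, Real.logb_pow]
      norm_num [Real.logb_self_eq_one]
    linarith
  have hkL1 : (α / c) * L ≤ 1 := hαc.trans hε1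
  have hk7 : α / c ≤ 1 / 7 := by
    nlinarith [mul_le_mul_of_nonneg_left hL7 hk0]
  have h1c : (0:ℝ) < 1 + 1 / c := by positivity
  -- bound on logb of product
  have hX : Real.logb 2 ((1 + 1 / c) * d) ≤ L + 2 / c := by
    rw [Real.logb_mul (ne_of_gt h1c) (ne_of_gt hd0)]
    have h2 : (1:ℝ)/2 < Real.log 2 := by
      have := Real.log_two_gt_d9; linarith
    have hlog1 : Real.log (1 + 1 / c) ≤ 1 / c := by
      have := Real.log_le_sub_one_of_pos h1c; linarith
    have hlognn : 0 ≤ Real.log (1 + 1 / c) := Real.log_nonneg (by linarith [one_div_pos.mpr hc0])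
    have : Real.logb 2 (1 + 1 / c) ≤ 2 / c := by
      rw [Real.logb, div_le_iff₀ (by linarith)]
      have h3 : (0:ℝ) ≤ 2/c := by positivity
      have h4 : 2/c * (1/2) ≤ 2/c * Real.log 2 := mul_le_mul_of_nonneg_left h2.le h3
      have h5 : 2/c * (1/2) = 1/c := by ring
      linarith
    linarith
  -- monotonicity in the log argument
  have hmono : (1 + (α / c) * Real.logb 2 ((1 + 1 / c) * d) - α / (2 * c))
          * (1 + 2 / c) * (1 + 1 / c) * d
      ≤ (1 + (α / c) * (L + 2 / c) - α / (2 * c)) * (1 + 2 / c) * (1 + 1 / c) * d := by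
    have h1 : 1 + (α / c) * Real.logb 2 ((1 + 1 / c) * d) - α / (2 * c)
        ≤ 1 + (α / c) * (L + 2 / c) - α / (2 * c) := by
      have := mul_le_mul_of_nonneg_left hX hk0
      linarith
    have h2c : (0:ℝ) ≤ 1 + 2 / c := by positivity
    gcongr
  -- apply aux lemma with u = 1/c, k = α/c
  have hu : (0:ℝ) < 1/c := by positivity
  have hu1 : (1:ℝ)/c ≤ 1/192 := by
    rw [div_le_div_iff₀ hc0 (by norm_num)]; linarith
  have hku : 96 * (1/c) ≤ (α/c) / 2 := by
    rw [show 96 * (1/c) = 96/c by ring, div_div, mul_comm c 2,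
      div_le_div_iff₀ hc0 (by positivity)]
    nlinarith
  have haux := stretch_aux (1/c) (α/c) L hu hu1 hk0 hk7 hkL1 hku
  have hkey : (48 / c) * d + (1 + (α / c) * (L + 2 / c) - α / (2 * c))
          * (1 + 2 / c) * (1 + 1 / c) * d ≤ (1 + (α / c) * L) * d := by
    have := mul_le_mul_of_nonneg_right haux hd0.le
    have heq : α / (2 * c) = (α / c) / 2 := by rw [div_div, mul_comm]
    calc (48 / c) * d + (1 + (α / c) * (L + 2 / c) - α / (2 * c))
          * (1 + 2 / c) * (1 + 1 / c) * d
        = (48*(1/c) + (1 + (α/c)*L + 2*(α/c)*(1/c) - (α/c)/2) * (1+2*(1/c)) * (1+(1/c))) * d := by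
          rw [heq]; ring
      _ ≤ (1 + (α / c) * L) * d := this
  linarith
end

section
/- Suppose in the unit disk graph metric d on S, sites s,t satisfy d(s,t) ≥ c, and the WSPD pair (u,v) representing (s,t) satisfies c·(|S_u|−1) ≤ d(s,t). If the local routing phase traverses a sequence of nested subtrees with vertex sets S_0 ⊆ S_1 ⊆ … ⊆ S_k = S_u where |S_i| ≤ (11/12)·|S_{i+1}|, visiting each tree by an Euler tour using edges of length at most 1, then the total distance traveled is at most (48/c)·d(s,t). -/
theorem local_routing_distance_bound {X : Type*} [MetricSpace X]
    (s t : X) (c : ℝ) (hc : 1 ≤ c) (hst : c ≤ dist s t)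
    {k : ℕ} (S : Fin (k + 1) → Finset X) (Su : Finset X)
    (hnested : ∀ i : Fin k, S i.castSucc ⊆ S i.succ)
    (hratio : ∀ i : Fin k, ((S i.castSucc).card : ℝ) ≤ (11 / 12) * (S i.succ).card)
    (hlast : S (Fin.last k) = Su)
    (hwspd : c * ((Su.card : ℝ) - 1) ≤ dist s t) :
    ∑ i : Fin (k + 1), (2 * ((S i).card : ℝ) - 2) ≤ (48 / c) * dist s t := by
  have hc0 : (0:ℝ) < c := lt_of_lt_of_le one_pos hc
  have hm0 : (0:ℝ) ≤ (Su.card : ℝ) := Nat.cast_nonneg _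
  -- downward induction bound
  have key : ∀ j, ∀ h : j ≤ k,
      ((S ⟨k - j, by omega⟩).card : ℝ) ≤ (11/12)^j * Su.card := by
    intro j
    induction j with
    | zero =>
      intro _
      have : (⟨k - 0, by omega⟩ : Fin (k+1)) = Fin.last k := by
        apply Fin.ext; simp [Fin.last]
      rw [this, hlast]; simp
    | succ j ih =>
      intro hj
      have hj' : j ≤ k := by omega
      have h1 := hratio ⟨k - j - 1, by omega⟩
      have e1 : (Fin.castSucc ⟨k - j - 1, by omega⟩ : Fin (k+1)) = ⟨k - (j+1), by omega⟩ := by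
        apply Fin.ext; simp [Fin.castSucc]; omega
      have e2 : (Fin.succ ⟨k - j - 1, by omega⟩ : Fin (k+1)) = ⟨k - j, by omega⟩ := by
        apply Fin.ext; simp [Fin.succ]; omega
      rw [e1, e2] at h1
      have h2 := ih hj'
      calc ((S ⟨k - (j+1), by omega⟩).card : ℝ)
          ≤ (11/12) * (S ⟨k - j, by omega⟩).card := h1
        _ ≤ (11/12) * ((11/12)^j * Su.card) := by
            apply mul_le_mul_of_nonneg_left h2 (by norm_num)
        _ = (11/12)^(j+1) * Su.card := by ring
  have hbound : ∀ i : Fin (k+1), ((S i).card : ℝ) ≤ (11/12)^(k - i.val) * Su.card := by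
    intro i
    have hi : i.val ≤ k := by omega
    have := key (k - i.val) (by omega)
    have e : (⟨k - (k - i.val), by omega⟩ : Fin (k+1)) = i := by
      apply Fin.ext; simp; omega
    rwa [e] at this
  have geom : ∀ n : ℕ, ∑ j ∈ Finset.range n, (11/12:ℝ)^j ≤ 12 := by
    intro n
    induction n with
    | zero => simp
    | succ n ih =>
      rw [Finset.sum_range_succ']
      have : ∑ i ∈ Finset.range n, (11/12:ℝ)^(i+1)
          = (11/12) * ∑ i ∈ Finset.range n, (11/12:ℝ)^i := by
        rw [Finset.mul_sum]
        exact Finset.sum_congr rfl (fun i _ => by ring)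
      rw [this]
      simp only [pow_zero]
      nlinarith
  have sum1 : ∑ i : Fin (k+1), (2 * ((S i).card : ℝ) - 2)
      ≤ ∑ i : Fin (k+1), 2 * ((11/12:ℝ)^(k - i.val) * Su.card) := by
    apply Finset.sum_le_sum
    intro i _
    have := hbound i
    linarith
  have sum2 : ∑ i : Fin (k+1), 2 * ((11/12:ℝ)^(k - i.val) * Su.card)
      = 2 * Su.card * ∑ j ∈ Finset.range (k+1), (11/12:ℝ)^j := by
    rw [Finset.mul_sum]
    rw [Fin.sum_univ_eq_sum_range (fun i => 2 * ((11/12:ℝ)^(k - i) * Su.card))]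
    rw [← Finset.sum_range_reflect (fun j => 2 * (Su.card:ℝ) * (11/12)^j) (k+1)]
    apply Finset.sum_congr rfl
    intro i hi
    simp only [Finset.mem_range] at hi
    have : k + 1 - 1 - i = k - i := by omega
    rw [this]; ring
  have hfin : 2 * (Su.card:ℝ) * 12 ≤ (48 / c) * dist s t := by
    rw [div_mul_eq_mul_div, le_div_iff₀ hc0]
    nlinarith
  calc ∑ i : Fin (k+1), (2 * ((S i).card : ℝ) - 2)
      ≤ 2 * Su.card * ∑ j ∈ Finset.range (k+1), (11/12:ℝ)^j := by rw [← sum2]; exact sum1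
    _ ≤ 2 * Su.card * 12 := by
        apply mul_le_mul_of_nonneg_left (geom _) (by positivity)
    _ ≤ (48 / c) * dist s t := hfin
end
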